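/- Let λ, λ̂ ∈ ℝ^d satisfy the strict interlacing 1 > λ_1 > λ̂_1 > λ_2 > λ̂_2 > ⋯ > λ_d > λ̂_d > 0, and define α_i = (Π_{j=1}^d (λ_i − λ̂_j)) / (Π_{j≠i} (λ_i − λ_j)). Then α_i > 0 for every i ∈ [d], and moreover Σ_{i=1}^d α_i/λ_i = 1 − (Π_{i=1}^d λ̂_i)/(Π_{i=1}^d λ_i) < 1. -/

import Mathlib

open Finset

private lemma alpha_prod_neg_helper {ι : Type*} (s : Finset ι) (f : ι → ℝ) :
    ∏ j ∈ s, -f j = (-1) ^ s.card * ∏ j ∈ s, f j := by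
  calc ∏ j ∈ s, -f j = ∏ j ∈ s, ((-1) * f j) :=
        prod_congr rfl fun j _ => (neg_one_mul _).symm
    _ = (-1) ^ s.card * ∏ j ∈ s, f j := by rw [prod_mul_distrib, prod_const]

private lemma alpha_chain (d : ℕ) (lam lamh : Fin d → ℝ)
    (h1 : ∀ i, lamh i < lam i)
    (h2 : ∀ i j : Fin d, (j : ℕ) = (i : ℕ) + 1 → lam j < lamh i) :
    ∀ i j : Fin d, (i : ℕ) < (j : ℕ) → lam j < lam i := by
  have key : ∀ n : ℕ, ∀ i j : Fin d, (j : ℕ) = (i : ℕ) + n + 1 → lam j < lam i := by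
    intro n
    induction n with
    | zero => intro i j hj; exact (h2 i j hj).trans (h1 i)
    | succ n ih =>
      intro i j hj
      have hk : (i : ℕ) + 1 < d := by have := j.isLt; omega
      exact (ih ⟨(i : ℕ) + 1, hk⟩ j (by simp; omega)).trans
        ((h2 i ⟨(i : ℕ) + 1, hk⟩ rfl).trans (h1 i))
  intro i j hij
  obtain ⟨n, hn⟩ : ∃ n, (j : ℕ) = (i : ℕ) + n + 1 := ⟨(j : ℕ) - (i : ℕ) - 1, by omega⟩
  exact key n i j hn

open Polynomial in
private lemma alpha_poly_key (d : ℕ) (lam lamh : Fin d → ℝ) (α : Fin d → ℝ)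
    (hinj : Function.Injective lam)
    (hα : ∀ i, α i = (∏ j, (lam i - lamh j)) /
      ∏ j ∈ Finset.univ.erase i, (lam i - lam j)) :
    (∏ i, lam i) - ∏ i, lamh i = ∑ i, α i * ∏ j ∈ Finset.univ.erase i, lam j := by
  classical
  rcases Nat.eq_zero_or_pos d with hd0 | hdpos
  · subst hd0; simp
  obtain ⟨m, rfl⟩ : ∃ m, d = m + 1 := ⟨d - 1, by omega⟩
  have hDne : ∀ i : Fin (m + 1), ∏ j ∈ univ.erase i, (lam i - lam j) ≠ 0 := by
    intro i
    refine prod_ne_zero_iff.2 fun j hj => ?_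
    rw [mem_erase] at hj
    exact sub_ne_zero.2 fun h => hj.1 (hinj h).symm
  have claim : (∏ j, (X - C (lamh j))) - (∏ j, (X - C (lam j)))
      = ∑ i, C (α i) * ∏ j ∈ univ.erase i, (X - C (lam j)) := by
    have hinjOn : Set.InjOn lam (univ : Finset (Fin (m + 1))) := fun a _ b _ h => hinj h
    refine Polynomial.eq_of_degrees_lt_of_eval_index_eq (v := lam) univ hinjOn ?_ ?_ ?_
    · rw [card_univ, Fintype.card_fin]
      have hF : (∏ j, (X - C (lamh j)) : ℝ[X]).Monic :=
        monic_prod_of_monic _ _ fun j _ => monic_X_sub_C _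
      have hG : (∏ j, (X - C (lam j)) : ℝ[X]).Monic :=
        monic_prod_of_monic _ _ fun j _ => monic_X_sub_C _
      have hdF : (∏ j, (X - C (lamh j)) : ℝ[X]).degree = ((m + 1 : ℕ) : WithBot ℕ) := by
        rw [degree_prod]
        simp [degree_X_sub_C]
      have hdG : (∏ j, (X - C (lam j)) : ℝ[X]).degree = ((m + 1 : ℕ) : WithBot ℕ) := by
        rw [degree_prod]
        simp [degree_X_sub_C]
      have := degree_sub_lt (hdF.trans hdG.symm) hF.ne_zero
        (by rw [hF.leadingCoeff, hG.leadingCoeff])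
      rw [hdF] at this
      exact this
    · rw [card_univ, Fintype.card_fin]
      refine lt_of_le_of_lt (degree_sum_le _ _) ?_
      rw [Nat.cast_withBot, Finset.sup_lt_iff (WithBot.bot_lt_coe (m + 1))]
      intro i _
      have hd : (∏ j ∈ univ.erase i, (X - C (lam j)) : ℝ[X]).degree
          = ((m : ℕ) : WithBot ℕ) := by
        rw [degree_prod]
        simp [degree_X_sub_C, Finset.card_erase_of_mem]
      refine lt_of_le_of_lt (degree_mul_le _ _) ?_
      rw [hd]
      refine lt_of_le_of_lt (add_le_add degree_C_le le_rfl) ?_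
      rw [zero_add, Nat.cast_withBot]
      exact WithBot.coe_lt_coe.2 (Nat.lt_succ_self m)
    · intro i _
      have hGz : ∏ j, (lam i - lam j) = 0 :=
        prod_eq_zero (mem_univ i) (sub_self _)
      have hH : ∑ k, α k * ∏ j ∈ univ.erase k, (lam i - lam j)
          = α i * ∏ j ∈ univ.erase i, (lam i - lam j) := by
        refine Finset.sum_eq_single i (fun k _ hk => ?_) (fun h => absurd (mem_univ i) h)
        rw [prod_eq_zero (mem_erase.2 ⟨hk.symm, mem_univ i⟩) (sub_self (lam i)), mul_zero]
      simp only [eval_sub, eval_prod, eval_finset_sum, eval_mul, eval_X, eval_C]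
      rw [hGz, hH, hα i, div_mul_cancel₀ _ (hDne i), sub_zero]
  have E := congrArg (Polynomial.eval 0) claim
  simp only [eval_sub, eval_prod, eval_finset_sum, eval_mul, eval_X, eval_C, zero_sub] at E
  rw [alpha_prod_neg_helper, alpha_prod_neg_helper (f := lam), card_univ,
    Fintype.card_fin] at E
  have hE2 : ∀ k : Fin (m + 1), ∏ j ∈ univ.erase k, -lam j
      = (-1) ^ m * ∏ j ∈ univ.erase k, lam j := by
    intro k
    rw [alpha_prod_neg_helper, Finset.card_erase_of_mem (mem_univ k), card_univ,
      Fintype.card_fin, Nat.add_sub_cancel]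
  simp only [hE2] at E
  have E3 : (-1 : ℝ) ^ m * ((∏ i, lam i) - ∏ i, lamh i)
      = (-1 : ℝ) ^ m * ∑ i, α i * ∏ j ∈ univ.erase i, lam j := by
    calc (-1 : ℝ) ^ m * ((∏ i, lam i) - ∏ i, lamh i)
        = (-1 : ℝ) ^ (m + 1) * (∏ i, lamh i) - (-1 : ℝ) ^ (m + 1) * ∏ i, lam i := by ring
      _ = ∑ i, α i * ((-1 : ℝ) ^ m * ∏ j ∈ univ.erase i, lam j) := E
      _ = ∑ i, (-1 : ℝ) ^ m * (α i * ∏ j ∈ univ.erase i, lam j) :=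
          sum_congr rfl fun i _ => by ring
      _ = (-1 : ℝ) ^ m * ∑ i, α i * ∏ j ∈ univ.erase i, lam j := (mul_sum _ _ _).symm
  exact mul_left_cancel₀ (pow_ne_zero m (by norm_num)) E3

/-- Under strict interlacing `1 > λ₁ > λ̂₁ > λ₂ > λ̂₂ > ⋯ > λ_d > λ̂_d > 0`,
the scale parameters `αᵢ = ∏ⱼ(λᵢ − λ̂ⱼ) / ∏_{j≠i}(λᵢ − λⱼ)` are positive, and
`∑ᵢ αᵢ/λᵢ = 1 − (∏ᵢ λ̂ᵢ)/(∏ᵢ λᵢ) < 1`. -/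
theorem alpha_pos_and_sum (d : ℕ) (lam lamh : Fin d → ℝ)
    (hlt1 : ∀ i, lam i < 1)
    (hpos : ∀ i, 0 < lamh i)
    (h1 : ∀ i, lamh i < lam i)
    (h2 : ∀ i j : Fin d, (j : ℕ) = (i : ℕ) + 1 → lam j < lamh i)
    (α : Fin d → ℝ)
    (hα : ∀ i, α i = (∏ j, (lam i - lamh j)) /
      ∏ j ∈ Finset.univ.erase i, (lam i - lam j)) :
    (∀ i, 0 < α i) ∧
    ∑ i, α i / lam i = 1 - (∏ i, lamh i) / (∏ i, lam i) ∧
    ∑ i, α i / lam i < 1 := by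
  classical
  have hlampos : ∀ i, 0 < lam i := fun i => (hpos i).trans (h1 i)
  have hanti := alpha_chain d lam lamh h1 h2
  have hle : ∀ a b : Fin d, (a : ℕ) ≤ (b : ℕ) → lam b ≤ lam a := by
    intro a b h
    rcases eq_or_lt_of_le h with he | hl
    · exact le_of_eq (congrArg lam (Fin.ext he.symm))
    · exact (hanti a b hl).le
  have hinj : Function.Injective lam := by
    intro a b hab
    by_contra hne
    rcases Nat.lt_or_gt_of_ne (show (a : ℕ) ≠ (b : ℕ) from fun h => hne (Fin.ext h)) with h | h
    · exact (hanti a b h).ne' hab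
    · exact (hanti b a h).ne hab
  have hcross : ∀ i j : Fin d, (j : ℕ) < (i : ℕ) → lam i < lamh j := by
    intro i j hji
    have hk : (j : ℕ) + 1 < d := by have := i.isLt; omega
    have h4 : lam i ≤ lam ⟨(j : ℕ) + 1, hk⟩ := hle _ _ (by simp; omega)
    exact lt_of_le_of_lt h4 (h2 j ⟨_, hk⟩ rfl)
  -- positivity of α
  have hαpos : ∀ i, 0 < α i := by
    intro i
    set s1 : Finset (Fin d) := univ.filter (fun j : Fin d => (j : ℕ) < (i : ℕ)) with hs1def
    set s2 : Finset (Fin d) := univ.filter (fun j : Fin d => (i : ℕ) < (j : ℕ)) with hs2def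
    have hset1 : (univ.erase i).filter (fun j : Fin d => (j : ℕ) < (i : ℕ)) = s1 := by
      ext j
      simp only [hs1def, mem_filter, mem_erase, mem_univ, true_and, and_true]
      exact ⟨fun h => h.2, fun h => ⟨Fin.ne_of_val_ne (by omega), h⟩⟩
    have hset2 : (univ.erase i).filter (fun j : Fin d => ¬(j : ℕ) < (i : ℕ)) = s2 := by
      ext j
      simp only [hs2def, mem_filter, mem_erase, mem_univ, true_and, and_true]
      constructor
      · rintro ⟨hne, h⟩
        rcases Nat.lt_or_ge (i : ℕ) (j : ℕ) with h' | h'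
        · exact h'
        · exact absurd (Fin.ext (by omega)) hne
      · intro h
        exact ⟨Fin.ne_of_val_ne (by omega), by omega⟩
    have hN : ∏ j, (lam i - lamh j) =
        (-1) ^ s1.card * ((∏ j ∈ s1, (lamh j - lam i)) *
          ∏ j ∈ univ.filter (fun j : Fin d => ¬(j : ℕ) < (i : ℕ)), (lam i - lamh j)) := by
      rw [← prod_filter_mul_prod_filter_not univ (fun j : Fin d => (j : ℕ) < (i : ℕ))
        (fun j => lam i - lamh j)]
      rw [show ∏ j ∈ univ.filter (fun j : Fin d => (j : ℕ) < (i : ℕ)), (lam i - lamh j)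
          = ∏ j ∈ s1, -(lamh j - lam i) from prod_congr rfl fun j _ => by ring,
        alpha_prod_neg_helper]
      ring
    have hD : ∏ j ∈ univ.erase i, (lam i - lam j) =
        (-1) ^ s1.card * ((∏ j ∈ s1, (lam j - lam i)) * ∏ j ∈ s2, (lam i - lam j)) := by
      rw [← prod_filter_mul_prod_filter_not (univ.erase i)
        (fun j : Fin d => (j : ℕ) < (i : ℕ)) (fun j => lam i - lam j), hset1, hset2]
      rw [show ∏ j ∈ s1, (lam i - lam j) = ∏ j ∈ s1, -(lam j - lam i) from
        prod_congr rfl fun j _ => by ring, alpha_prod_neg_helper]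
      ring
    have hP1 : 0 < ∏ j ∈ s1, (lamh j - lam i) := by
      refine prod_pos fun j hj => ?_
      rw [hs1def, mem_filter] at hj
      exact sub_pos.2 (hcross i j hj.2)
    have hP2 : 0 < ∏ j ∈ univ.filter (fun j : Fin d => ¬(j : ℕ) < (i : ℕ)),
        (lam i - lamh j) := by
      refine prod_pos fun j hj => ?_
      rw [mem_filter] at hj
      exact sub_pos.2 (lt_of_lt_of_le (h1 j) (hle i j (by omega)))
    have hQ1 : 0 < ∏ j ∈ s1, (lam j - lam i) := by
      refine prod_pos fun j hj => ?_
      rw [hs1def, mem_filter] at hj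
      exact sub_pos.2 (hanti j i hj.2)
    have hQ2 : 0 < ∏ j ∈ s2, (lam i - lam j) := by
      refine prod_pos fun j hj => ?_
      rw [hs2def, mem_filter] at hj
      exact sub_pos.2 (hanti i j hj.2)
    rw [hα i, hN, hD, mul_div_mul_left _ _ (pow_ne_zero s1.card (by norm_num))]
    exact div_pos (mul_pos hP1 hP2) (mul_pos hQ1 hQ2)
  refine ⟨hαpos, ?_⟩
  have hBpos : 0 < ∏ i, lam i := prod_pos fun i _ => hlampos i
  have hApos : 0 < ∏ i, lamh i := prod_pos fun i _ => hpos i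
  have key := alpha_poly_key d lam lamh α hinj hα
  have hterm : ∀ i : Fin d, α i / lam i
      = (α i * ∏ j ∈ univ.erase i, lam j) / ∏ j, lam j := by
    intro i
    have hC : (0 : ℝ) < ∏ j ∈ univ.erase i, lam j :=
      prod_pos fun j _ => hlampos j
    rw [div_eq_div_iff (ne_of_gt (hlampos i)) (ne_of_gt hBpos),
      ← Finset.mul_prod_erase univ lam (mem_univ i)]
    ring
  have hsum : ∑ i, α i / lam i = 1 - (∏ i, lamh i) / ∏ i, lam i := by
    rw [sum_congr rfl fun i _ => hterm i, ← sum_div, ← key, sub_div,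
      div_self (ne_of_gt hBpos)]
  refine ⟨hsum, ?_⟩
  rw [hsum]
  have : 0 < (∏ i, lamh i) / ∏ i, lam i := div_pos hApos hBpos
  linarith
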